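/- Let f : ℝ^d → ℝ be convex and differentiable with L-Lipschitz gradient (L > 0), with nonempty set of minimizers X⋆ and minimum value f⋆. Let (x^(k)) be the iterates of the accelerated method applied to f from an initialization x^(0). Then for any real numbers ε, δ, D with δ ≥ 2ε > 0 and D > 0, if f(x^(0)) − f⋆ ≥ δ and dist(x^(0), X⋆) ≤ D, there exists a natural number k with k ≤ √(2LD²/(δ − ε)) such that f(x^(k)) ≤ f(x^(0)) − ε. -/

import Mathlib

set_option maxHeartbeats 1000000

open Set InnerProductSpace
open scoped RealInnerProductSpace

section Aux
variable {E : Type*} [NormedAddCommGroup E] [InnerProductSpace ℝ E] [CompleteSpace E]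

lemma line_hasDerivAt {f : E → ℝ} {g : E} (a v : E) (t : ℝ)
    (hg : HasGradientAt f g (a + t • v)) :
    HasDerivAt (fun s : ℝ => f (a + s • v)) (⟪g, v⟫_ℝ) t := by
  have h1 : HasDerivAt (fun s : ℝ => a + s • v) v t := by
    simpa using ((hasDerivAt_id t).smul_const v).const_add a
  have := hg.hasFDerivAt.comp_hasDerivAt t h1
  simpa [InnerProductSpace.toDual_apply_apply, Function.comp_def] using this

lemma conv_first_order {f : E → ℝ} {f' : E → E}
    (hconv : ConvexOn ℝ Set.univ f) (hgrad : ∀ z, HasGradientAt f (f' z) z)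
    (a b : E) : f a + ⟪f' a, b - a⟫_ℝ ≤ f b := by
  set g : ℝ → ℝ := fun s : ℝ => f (a + s • (b - a)) with hgdef
  have hgc : ConvexOn ℝ Set.univ g := by
    have := hconv.comp_affineMap
      (AffineMap.const ℝ ℝ a + (LinearMap.toSpanSingleton ℝ E (b - a)).toAffineMap)
    simpa [Function.comp_def] using this
  have hd : HasDerivAt g (⟪f' a, b - a⟫_ℝ) 0 := by
    have := line_hasDerivAt a (b - a) 0 (by simpa using hgrad a)
    simpa using this
  have := hgc.le_slope_of_hasDerivAt (mem_univ (0 : ℝ)) (mem_univ (1 : ℝ)) zero_lt_one hd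
  have hslope : slope g 0 1 = f b - f a := by
    simp [slope, hgdef]
  rw [hslope] at this
  linarith

lemma smooth_upper {f : E → ℝ} {f' : E → E} {L : ℝ}
    (hgrad : ∀ z, HasGradientAt f (f' z) z)
    (hlip : ∀ z w, ‖f' z - f' w‖ ≤ L * ‖z - w‖)
    (a b : E) : f b ≤ f a + ⟪f' a, b - a⟫_ℝ + L / 2 * ‖b - a‖ ^ 2 := by
  set v : E := b - a with hv
  set h : ℝ → ℝ := fun t => f (a + t • v) - ⟪f' a, v⟫_ℝ * t - L * ‖v‖ ^ 2 / 2 * t ^ 2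
    with hhdef
  have hd : ∀ t : ℝ, HasDerivAt h
      (⟪f' (a + t • v), v⟫_ℝ - ⟪f' a, v⟫_ℝ - L * ‖v‖ ^ 2 / 2 * (2 * t)) t := by
    intro t
    have h1 : HasDerivAt (fun s : ℝ => f (a + s • v)) (⟪f' (a + t • v), v⟫_ℝ) t :=
      line_hasDerivAt a v t (hgrad _)
    have h2 : HasDerivAt (fun s : ℝ => ⟪f' a, v⟫_ℝ * s) (⟪f' a, v⟫_ℝ) t := by
      simpa using (hasDerivAt_id t).const_mul (⟪f' a, v⟫_ℝ)
    have h3 : HasDerivAt (fun s : ℝ => L * ‖v‖ ^ 2 / 2 * s ^ 2)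
        (L * ‖v‖ ^ 2 / 2 * (2 * t)) t := by
      simpa using (hasDerivAt_pow 2 t).const_mul (L * ‖v‖ ^ 2 / 2)
    exact (h1.sub h2).sub h3
  have hanti : AntitoneOn h (Icc (0 : ℝ) 1) := by
    apply antitoneOn_of_deriv_nonpos (convex_Icc 0 1)
    · exact (Differentiable.continuous (fun t => (hd t).differentiableAt)).continuousOn
    · intro t ht
      exact ((hd t).differentiableAt).differentiableWithinAt
    · intro t ht
      rw [interior_Icc] at ht
      rw [(hd t).deriv]
      have hip : ⟪f' (a + t • v) - f' a, v⟫_ℝ ≤ ‖f' (a + t • v) - f' a‖ * ‖v‖ :=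
        real_inner_le_norm _ _
      have hlipb : ‖f' (a + t • v) - f' a‖ ≤ L * (t * ‖v‖) := by
        have := hlip (a + t • v) a
        simpa [norm_smul, abs_of_nonneg ht.1.le] using this
      have hns : ‖f' (a + t • v) - f' a‖ * ‖v‖ ≤ L * (t * ‖v‖) * ‖v‖ :=
        mul_le_mul_of_nonneg_right hlipb (norm_nonneg _)
      have hsplit : ⟪f' (a + t • v) - f' a, v⟫_ℝ
          = ⟪f' (a + t • v), v⟫_ℝ - ⟪f' a, v⟫_ℝ := inner_sub_left _ _ _
      nlinarith [hip, hns]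
  have := hanti (left_mem_Icc.2 zero_le_one) (right_mem_Icc.2 zero_le_one) zero_le_one
  have h0 : h 0 = f a := by simp [hhdef]
  have h1 : h 1 = f b - ⟪f' a, v⟫_ℝ - L * ‖v‖ ^ 2 / 2 := by simp [hhdef, hv]
  rw [h0, h1] at this
  rw [hv] at *
  nlinarith [this]

end Aux

theorem accel_decrement {d : ℕ} (f : EuclideanSpace ℝ (Fin d) → ℝ)
    (f' : EuclideanSpace ℝ (Fin d) → EuclideanSpace ℝ (Fin d))
    (L : ℝ) (hL : 0 < L)
    (hconv : ConvexOn ℝ Set.univ f)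
    (hgrad : ∀ z, HasGradientAt f (f' z) z)
    (hlip : ∀ z w, ‖f' z - f' w‖ ≤ L * ‖z - w‖)
    (fstar : ℝ) (Xstar : Set (EuclideanSpace ℝ (Fin d)))
    (hXstar : Xstar = {z | f z = fstar})
    (hlb : ∀ z, fstar ≤ f z)
    (hne : Xstar.Nonempty)
    (x y : ℕ → EuclideanSpace ℝ (Fin d)) (θ : ℕ → ℝ)
    (hθ0 : θ 0 = 1) (hy0 : y 0 = x 0)
    (hx : ∀ k, x (k + 1) = y k - (1 / L) • f' (y k))
    (hθ : ∀ k, θ (k + 1) = (1 + Real.sqrt (1 + 4 * (θ k) ^ 2)) / 2)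
    (hy : ∀ k, y (k + 1) = x (k + 1) + ((θ k - 1) / θ (k + 1)) • (x (k + 1) - x k))
    (ε δ D : ℝ) (hε : 0 < ε) (hδε : δ ≥ 2 * ε) (hD : 0 < D)
    (hgap : f (x 0) - fstar ≥ δ)
    (hdist : Metric.infDist (x 0) Xstar ≤ D) :
    ∃ k : ℕ, (k : ℝ) ≤ Real.sqrt (2 * L * D ^ 2 / (δ - ε)) ∧
      f (x k) ≤ f (x 0) - ε := by
  -- pick a nearest minimizer
  have hcont : Continuous f := (Differentiable.continuous
    (fun z => (hgrad z).differentiableAt))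
  have hclosed : IsClosed Xstar := by
    rw [hXstar]; exact isClosed_eq hcont continuous_const
  obtain ⟨xs, hxsX, hxs_eq⟩ := hclosed.exists_infDist_eq_dist hne (x 0)
  have hfs : f xs = fstar := by rw [hXstar] at hxsX; exact hxsX
  have hDxs : ‖x 0 - xs‖ ≤ D := by
    rw [← dist_eq_norm, ← hxs_eq]; exact hdist
  -- gradient vanishes at xs
  have hf'xs : f' xs = 0 := by
    have hloc : IsLocalMin f xs :=
      Filter.Eventually.of_forall (fun z => hfs ▸ hlb z)
    have h0 : (toDual ℝ (EuclideanSpace ℝ (Fin d))) (f' xs) = 0 :=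
      hloc.hasFDerivAt_eq_zero (hgrad xs).hasFDerivAt
    have := congrArg (toDual ℝ (EuclideanSpace ℝ (Fin d))).symm h0
    simpa using this
  -- θ facts
  have hθ1 : ∀ k, 1 ≤ θ k := by
    intro k
    induction k with
    | zero => simp [hθ0]
    | succ n ih =>
      rw [hθ n]
      have hs := Real.sqrt_nonneg (1 + 4 * θ n ^ 2)
      have hs2 : Real.sqrt (1 + 4 * θ n ^ 2) ^ 2 = 1 + 4 * θ n ^ 2 :=
        Real.sq_sqrt (by positivity)
      nlinarith
  have hθrec : ∀ k, θ (k + 1) ^ 2 - θ (k + 1) = θ k ^ 2 := by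
    intro k
    rw [hθ k]
    have hs2 : Real.sqrt (1 + 4 * θ k ^ 2) ^ 2 = 1 + 4 * θ k ^ 2 :=
      Real.sq_sqrt (by positivity)
    nlinarith
  have hθgrow : ∀ k : ℕ, ((k : ℝ) + 2) / 2 ≤ θ k := by
    intro k
    induction k with
    | zero => simp [hθ0]
    | succ n ih =>
      rw [hθ n]
      have hs := Real.sqrt_nonneg (1 + 4 * θ n ^ 2)
      have hs2 : Real.sqrt (1 + 4 * θ n ^ 2) ^ 2 = 1 + 4 * θ n ^ 2 :=
        Real.sq_sqrt (by positivity)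
      have h2θ : 2 * θ n ≤ Real.sqrt (1 + 4 * θ n ^ 2) := by
        nlinarith [sq_nonneg (Real.sqrt (1 + 4 * θ n ^ 2) - 2 * θ n), hθ1 n]
      push_cast
      nlinarith
  -- key one-step inequality
  have hstep : ∀ (k : ℕ) (z : EuclideanSpace ℝ (Fin d)),
      f (x (k + 1)) ≤ f z + L * ⟪y k - x (k + 1), y k - z⟫_ℝ
        - L / 2 * ‖y k - x (k + 1)‖ ^ 2 := by
    intro k z
    have hg : f' (y k) = L • (y k - x (k + 1)) := by
      rw [hx k, sub_sub_cancel, smul_smul]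
      rw [mul_one_div, div_self hL.ne', one_smul]
    have hB := smooth_upper hgrad hlip (y k) (x (k + 1))
    have hA := conv_first_order hconv hgrad (y k) z
    have e1 : ⟪f' (y k), x (k + 1) - y k⟫_ℝ = -(L * ‖y k - x (k + 1)‖ ^ 2) := by
      rw [hg, ← neg_sub (y k) (x (k+1)), inner_neg_right, real_inner_smul_left,
        real_inner_self_eq_norm_sq]
    have e2 : ⟪f' (y k), z - y k⟫_ℝ = -(L * ⟪y k - x (k + 1), y k - z⟫_ℝ) := by
      rw [hg, ← neg_sub (y k) z, inner_neg_right, real_inner_smul_left]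
    have e3 : ‖x (k + 1) - y k‖ = ‖y k - x (k + 1)‖ := norm_sub_rev _ _
    rw [e1, e3] at hB
    rw [e2] at hA
    linarith
  -- energy sequence
  set u : ℕ → EuclideanSpace ℝ (Fin d) :=
    fun k => θ k • y k - (θ k - 1) • x k - xs with hu
  have hu0 : u 0 = x 0 - xs := by simp [hu, hθ0, hy0]
  have hushift : ∀ k, u (k + 1) = u k - θ k • (y k - x (k + 1)) := by
    intro k
    have hθpos : θ (k + 1) ≠ 0 := by linarith [hθ1 (k + 1)]
    simp only [hu, hy k]
    rw [smul_add, smul_smul, mul_div_cancel₀ _ hθpos]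
    module
  have hukey : ∀ k, θ k ^ 2 * (f (x (k + 1)) - fstar)
      - (θ k ^ 2 - θ k) * (f (x k) - fstar)
      ≤ L / 2 * (‖u k‖ ^ 2 - ‖u (k + 1)‖ ^ 2) := by
    intro k
    set g : EuclideanSpace ℝ (Fin d) := y k - x (k + 1) with hg
    set t : ℝ := θ k with ht
    have ht1 : 1 ≤ t := hθ1 k
    have h1 := hstep k (x k)
    have h2 := hstep k xs
    rw [hfs] at h2
    have hU : ⟪u k, g⟫_ℝ = (t - 1) * ⟪g, y k - x k⟫_ℝ + ⟪g, y k - xs⟫_ℝ := by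
      rw [real_inner_comm]
      have : u k = (t - 1) • (y k - x k) + (y k - xs) := by
        simp only [hu, ht]; module
      rw [this, inner_add_right, real_inner_smul_right]
    have hnorm : ‖u (k + 1)‖ ^ 2 = ‖u k‖ ^ 2 - 2 * t * ⟪u k, g⟫_ℝ + t ^ 2 * ‖g‖ ^ 2 := by
      rw [hushift k, ← hg, ← ht, norm_sub_sq_real, real_inner_smul_right, norm_smul]
      rw [mul_pow, Real.norm_eq_abs, sq_abs]
      ring
    rw [hnorm]
    have htt : (0:ℝ) ≤ t * (t - 1) := by nlinarith
    have e1 := mul_le_mul_of_nonneg_left h1 htt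
    have e2 := mul_le_mul_of_nonneg_left h2 (by linarith : (0:ℝ) ≤ t)
    have hU' : L * t * ⟪u k, g⟫_ℝ
        = L * t * ((t - 1) * ⟪g, y k - x k⟫_ℝ + ⟪g, y k - xs⟫_ℝ) := by rw [hU]
    nlinarith [e1, e2, hU']
  -- telescoped bound
  have htel : ∀ k, θ k ^ 2 * (f (x (k + 1)) - fstar) + L / 2 * ‖u (k + 1)‖ ^ 2
      ≤ L / 2 * ‖u 0‖ ^ 2 := by
    intro k
    induction k with
    | zero =>
      have h := hukey 0
      rw [hθ0] at h ⊢
      linarith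
    | succ n ih =>
      have h := hukey (n + 1)
      rw [hθrec n] at h
      linarith
  have hrate : ∀ k, θ k ^ 2 * (f (x (k + 1)) - fstar) ≤ L / 2 * ‖x 0 - xs‖ ^ 2 := by
    intro k
    have h := htel k
    rw [hu0] at h
    nlinarith [sq_nonneg ‖u (k + 1)‖]
  -- δ is bounded by the smoothness gap
  have hub : δ ≤ L / 2 * ‖x 0 - xs‖ ^ 2 := by
    have := smooth_upper hgrad hlip xs (x 0)
    rw [hf'xs] at this
    simp only [inner_zero_left] at this
    rw [hfs] at this
    linarith
  -- the target bound K
  set K : ℝ := Real.sqrt (2 * L * D ^ 2 / (δ - ε)) with hK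
  have hδε' : 0 < δ - ε := by linarith
  have hK2 : K ^ 2 = 2 * L * D ^ 2 / (δ - ε) := Real.sq_sqrt (by positivity)
  have hKnn : 0 ≤ K := Real.sqrt_nonneg _
  have hsqD : ‖x 0 - xs‖ ^ 2 ≤ D ^ 2 := by nlinarith [norm_nonneg (x 0 - xs)]
  have hLD : 4 * δ ≤ 2 * L * D ^ 2 := by
    nlinarith [mul_le_mul_of_nonneg_left hsqD hL.le]
  have hKgt : 2 < K := by
    have h4 : (4 : ℝ) < K ^ 2 := by
      rw [hK2, lt_div_iff₀ hδε']
      nlinarith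
    nlinarith
  -- choose k
  have hceil3 : 3 ≤ ⌈K⌉₊ := by
    have h2 : (2 : ℝ) < (⌈K⌉₊ : ℝ) := lt_of_lt_of_le hKgt (Nat.le_ceil K)
    have h2' : 2 < ⌈K⌉₊ := by exact_mod_cast h2
    omega
  refine ⟨⌈K⌉₊ - 1, ?_, ?_⟩
  · have hcast : ((⌈K⌉₊ - 1 : ℕ) : ℝ) = (⌈K⌉₊ : ℝ) - 1 := by
      have : 1 ≤ ⌈K⌉₊ := by omega
      push_cast [this]; ring
    rw [hcast]
    have := Nat.ceil_lt_add_one hKnn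
    linarith
  · -- rate at index m = ⌈K⌉₊ - 2
    set m : ℕ := ⌈K⌉₊ - 2 with hm
    have hmk : m + 1 = ⌈K⌉₊ - 1 := by omega
    have hgrowm : ((m : ℝ) + 2) / 2 ≤ θ m := hθgrow m
    have hm2 : K ≤ (m : ℝ) + 2 := by
      have : ((m : ℝ) + 2) = (⌈K⌉₊ : ℝ) := by
        have h2 : 2 ≤ ⌈K⌉₊ := by omega
        push_cast [hm, h2]
        ring
      rw [this]
      exact Nat.le_ceil K
    have hθm : K / 2 ≤ θ m := by linarith
    have hθmpos : 0 < θ m := by linarith [hθ1 m]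
    have hr := hrate m
    rw [hmk] at hr
    have hfnn : 0 ≤ f (x (⌈K⌉₊ - 1)) - fstar := by linarith [hlb (x (⌈K⌉₊ - 1))]
    have hnormD : ‖x 0 - xs‖ ^ 2 ≤ D ^ 2 := by
      nlinarith [norm_nonneg (x 0 - xs)]
    -- K^2/4 * gap ≤ L/2 D^2  ⇒ gap ≤ 2 L D^2 / K^2 = δ - ε
    have hKpos : 0 < K := by linarith
    have hchain : K ^ 2 / 4 * (f (x (⌈K⌉₊ - 1)) - fstar) ≤ L / 2 * D ^ 2 := by
      have hθsq : K ^ 2 / 4 ≤ θ m ^ 2 := by nlinarith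
      nlinarith [mul_le_mul_of_nonneg_right hθsq hfnn]
    have hgapk : f (x (⌈K⌉₊ - 1)) - fstar ≤ δ - ε := by
      have hK2pos : 0 < K ^ 2 / 4 := by positivity
      have h1 : f (x (⌈K⌉₊ - 1)) - fstar ≤ L / 2 * D ^ 2 / (K ^ 2 / 4) := by
        rw [le_div_iff₀ hK2pos, mul_comm]
        exact hchain
      have h2 : L / 2 * D ^ 2 / (K ^ 2 / 4) = δ - ε := by
        rw [hK2]
        field_simp
        ring
      linarith [h1, h2.le, h2.ge]
    linarith
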